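/- The infinite-horizon discounted cost series Σ_{t=0}^{∞} γ^t Σ_{x∈S} c(x)·(μP^t)(x) converges, and |Σ_{t=0}^{∞} γ^t Σ_{x∈S} c(x)·(μP^t)(x) − (1/(1−γ))·Σ_{x∈S} c(x)·Δ(x)| ≤ 2·(max_{x∈S}|c(x)|)·B/(1−γβ). -/

import Mathlib

open Finset

theorem stmt_1 {S : Type*} [Fintype S] [DecidableEq S] [Nonempty S]
    (P : Matrix S S ℝ)
    (hP0 : ∀ x x', 0 ≤ P x x') (hP1 : ∀ x, ∑ x', P x x' = 1)
    (μ Δ : S → ℝ)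
    (hμ0 : ∀ x, 0 ≤ μ x) (hμ1 : ∑ x, μ x = 1)
    (hΔ0 : ∀ x, 0 ≤ Δ x) (hΔ1 : ∑ x, Δ x = 1)
    (hstat : ∀ x', ∑ x, Δ x * P x x' = Δ x')
    (c : S → ℝ) (γ : ℝ) (hγ : γ ∈ Set.Ioo (0 : ℝ) 1)
    (B β : ℝ) (hB : 0 < B) (hβ : β ∈ Set.Ioo (0 : ℝ) 1)
    (hmix : ∀ t : ℕ, ∑ x, |(∑ y, μ y * (P ^ t) y x) - Δ x| ≤ 2 * B * β ^ t) :
    ∃ J : ℝ,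
      HasSum (fun t : ℕ => γ ^ t * ∑ x, c x * (∑ y, μ y * (P ^ t) y x)) J ∧
      |J - (1 / (1 - γ)) * ∑ x, c x * Δ x|
        ≤ 2 * (Finset.univ.sup' Finset.univ_nonempty fun x => |c x|) * B / (1 - γ * β) := by
  obtain ⟨hγ0, hγ1⟩ := hγ
  obtain ⟨hβ0, hβ1⟩ := hβ
  set M : ℝ := Finset.univ.sup' Finset.univ_nonempty fun x => |c x| with hM
  have hMx : ∀ x : S, |c x| ≤ M := fun x =>
    Finset.le_sup' (fun x => |c x|) (Finset.mem_univ x)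
  have hM0 : 0 ≤ M := le_trans (abs_nonneg _) (hMx (Classical.arbitrary S))
  set g : ℕ → ℝ := fun t => γ ^ t * ∑ x, c x * ((∑ y, μ y * (P ^ t) y x) - Δ x) with hg
  have hγβ0 : 0 ≤ γ * β := le_of_lt (mul_pos hγ0 hβ0)
  have hγβ1 : γ * β < 1 := by nlinarith
  have hgb : ∀ t, ‖g t‖ ≤ 2 * M * B * (γ * β) ^ t := by
    intro t
    have h1 : |∑ x, c x * ((∑ y, μ y * (P ^ t) y x) - Δ x)| ≤ M * (2 * B * β ^ t) := by
      calc |∑ x, c x * ((∑ y, μ y * (P ^ t) y x) - Δ x)|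
          ≤ ∑ x, |c x * ((∑ y, μ y * (P ^ t) y x) - Δ x)| := Finset.abs_sum_le_sum_abs _ _
        _ ≤ ∑ x, M * |(∑ y, μ y * (P ^ t) y x) - Δ x| := by
            apply Finset.sum_le_sum
            intro x _
            rw [abs_mul]
            exact mul_le_mul_of_nonneg_right (hMx x) (abs_nonneg _)
        _ = M * ∑ x, |(∑ y, μ y * (P ^ t) y x) - Δ x| := by rw [Finset.mul_sum]
        _ ≤ M * (2 * B * β ^ t) := mul_le_mul_of_nonneg_left (hmix t) hM0
    have : ‖g t‖ = γ ^ t * |∑ x, c x * ((∑ y, μ y * (P ^ t) y x) - Δ x)| := by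
      rw [hg, Real.norm_eq_abs, abs_mul, abs_pow, abs_of_pos hγ0]
    rw [this, mul_pow]
    calc γ ^ t * |∑ x, c x * ((∑ y, μ y * (P ^ t) y x) - Δ x)|
        ≤ γ ^ t * (M * (2 * B * β ^ t)) :=
          mul_le_mul_of_nonneg_left h1 (pow_nonneg (le_of_lt hγ0) t)
      _ = 2 * M * B * (γ ^ t * β ^ t) := by ring
  have hgeo : Summable fun t : ℕ => 2 * M * B * (γ * β) ^ t :=
    (summable_geometric_of_lt_one hγβ0 hγβ1).mul_left _
  have hgsum : Summable g := Summable.of_norm_bounded hgeo hgb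
  have hbase : HasSum (fun t : ℕ => γ ^ t * ∑ x, c x * Δ x)
      ((1 - γ)⁻¹ * ∑ x, c x * Δ x) :=
    (hasSum_geometric_of_lt_one (le_of_lt hγ0) hγ1).mul_right _
  have hkey : (fun t : ℕ => γ ^ t * ∑ x, c x * (∑ y, μ y * (P ^ t) y x))
      = fun t => γ ^ t * ∑ x, c x * Δ x + g t := by
    funext t
    rw [hg]
    simp only [mul_sub, Finset.sum_sub_distrib]
    ring
  refine ⟨(1 - γ)⁻¹ * ∑ x, c x * Δ x + ∑' t, g t, ?_, ?_⟩
  · rw [hkey]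
    exact hbase.add hgsum.hasSum
  · have : (1 : ℝ) / (1 - γ) = (1 - γ)⁻¹ := one_div _
    rw [this]
    have heq : (1 - γ)⁻¹ * ∑ x, c x * Δ x + (∑' t, g t) - (1 - γ)⁻¹ * ∑ x, c x * Δ x
        = ∑' t, g t := by ring
    rw [heq]
    have hgeosum : HasSum (fun t : ℕ => 2 * M * B * (γ * β) ^ t)
        (2 * M * B * (1 - γ * β)⁻¹) :=
      (hasSum_geometric_of_lt_one hγβ0 hγβ1).mul_left _
    calc |∑' t, g t| ≤ 2 * M * B * (1 - γ * β)⁻¹ := by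
          rw [← Real.norm_eq_abs]
          exact tsum_of_norm_bounded hgeosum hgb
      _ = 2 * M * B / (1 - γ * β) := (div_eq_mul_inv _ _).symm
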